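/- Le Cam's inequality: Let ε_1, ..., ε_m be independent Bernoulli random variables with P(ε_j = 1) = p_j, and let Σ_m = ε_1 + ... + ε_m and λ = p_1 + ... + p_m. Then the total variation-type distance satisfies ∑_{k=0}^∞ |P(Σ_m = k) − e^{−λ} λ^k / k!| ≤ 2 ∑_{j=1}^m p_j². -/

import Mathlib

open MeasureTheory ProbabilityTheory
open scoped ENNReal

namespace LeCamAux

/-- Poisson pmf with parameter `l`. -/
noncomputable def poi (l : ℝ) (k : ℕ) : ℝ := Real.exp (-l) * l ^ k / (Nat.factorial k)

/-- Bernoulli pmf with parameter `p`. -/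
noncomputable def bern (p : ℝ) (k : ℕ) : ℝ := if k = 0 then 1 - p else if k = 1 then p else 0

/-- Convolution of sequences. -/
noncomputable def conv (a b : ℕ → ℝ) (k : ℕ) : ℝ :=
  ∑ i ∈ Finset.range (k + 1), a i * b (k - i)

lemma hasSum_poi (l : ℝ) : HasSum (poi l) 1 := by
  have h : HasSum (fun k : ℕ => l ^ k / (Nat.factorial k)) (Real.exp l) := by
    rw [Real.exp_eq_exp_ℝ]; exact NormedSpace.expSeries_div_hasSum_exp l
  have h2 := h.mul_left (Real.exp (-l))
  have h3 : Real.exp (-l) * Real.exp l = 1 := by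
    rw [← Real.exp_add]; simp
  rw [h3] at h2
  have h4 : poi l = fun k => Real.exp (-l) * (l ^ k / (Nat.factorial k)) := by
    funext k; simp [poi, mul_div_assoc]
  rw [h4]
  exact h2

lemma summable_poi (l : ℝ) : Summable (poi l) := (hasSum_poi l).summable

lemma tsum_poi (l : ℝ) : ∑' k, poi l k = 1 := (hasSum_poi l).tsum_eq

lemma poi_nonneg {l : ℝ} (hl : 0 ≤ l) (k : ℕ) : 0 ≤ poi l k := by
  unfold poi; positivity

lemma bern_ne_finset_zero (p : ℝ) : ∀ k ∉ ({0, 1} : Finset ℕ), bern p k = 0 := by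
  intro k hk
  simp only [Finset.mem_insert, Finset.mem_singleton, not_or] at hk
  simp [bern, hk.1, hk.2]

lemma summable_bern (p : ℝ) : Summable (bern p) :=
  summable_of_ne_finset_zero (bern_ne_finset_zero p)

lemma tsum_bern (p : ℝ) : ∑' k, bern p k = 1 := by
  rw [tsum_eq_sum (bern_ne_finset_zero p)]
  norm_num [bern]

lemma bern_nonneg {p : ℝ} (hp0 : 0 ≤ p) (hp1 : p ≤ 1) (k : ℕ) : 0 ≤ bern p k := by
  unfold bern
  split_ifs <;> linarith

lemma conv_bern (a : ℕ → ℝ) (p : ℝ) (k : ℕ) :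
    conv a (bern p) (k + 1) = a (k + 1) * (1 - p) + a k * p := by
  unfold conv
  rw [Finset.sum_range_succ, Finset.sum_range_succ]
  have hz : ∀ i ∈ Finset.range k, a i * bern p (k + 1 - i) = 0 := by
    intro i hi
    have hik : i < k := Finset.mem_range.mp hi
    have h1 : k + 1 - i ≠ 0 := by omega
    have h2 : k + 1 - i ≠ 1 := by omega
    simp [bern, h1, h2]
  rw [Finset.sum_eq_zero hz]
  have e0 : k + 1 - (k + 1) = 0 := by omega
  have e1 : k + 1 - k = 1 := by omega
  simp [e0, e1, bern]
  ring

lemma conv_zero (a b : ℕ → ℝ) : conv a b 0 = a 0 * b 0 := by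
  simp [conv]

lemma poi_conv (x y : ℝ) (k : ℕ) : poi (x + y) k = conv (poi x) (poi y) k := by
  unfold poi conv
  rw [add_pow, Finset.mul_sum, Finset.sum_div]
  refine Finset.sum_congr rfl fun i hi => ?_
  have hik : i ≤ k := Nat.lt_succ_iff.mp (Finset.mem_range.mp hi)
  rw [Nat.cast_choose ℝ hik, neg_add, Real.exp_add]
  have h1 : (Nat.factorial i : ℝ) ≠ 0 := Nat.cast_ne_zero.mpr (Nat.factorial_ne_zero _)
  have h2 : (Nat.factorial (k - i) : ℝ) ≠ 0 := Nat.cast_ne_zero.mpr (Nat.factorial_ne_zero _)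
  have h3 : (Nat.factorial k : ℝ) ≠ 0 := Nat.cast_ne_zero.mpr (Nat.factorial_ne_zero _)
  field_simp

lemma hasSum_conv {a b : ℕ → ℝ} (ha : Summable a) (hb : Summable b) :
    HasSum (conv a b) ((∑' k, a k) * ∑' k, b k) := by
  have ha' : Summable fun k => ‖a k‖ := by simpa [Real.norm_eq_abs] using summable_abs_iff.mpr ha
  have hb' : Summable fun k => ‖b k‖ := by simpa [Real.norm_eq_abs] using summable_abs_iff.mpr hb
  exact hasSum_sum_range_mul_of_summable_norm ha' hb'

lemma abs_conv_le_left {x y : ℕ → ℝ} (hy : ∀ k, 0 ≤ y k) (k : ℕ) :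
    |conv x y k| ≤ conv (fun n => |x n|) y k := by
  refine (Finset.abs_sum_le_sum_abs _ _).trans (Finset.sum_le_sum fun i _ => ?_)
  rw [abs_mul, abs_of_nonneg (hy _)]

lemma abs_conv_le_right {x y : ℕ → ℝ} (hx : ∀ k, 0 ≤ x k) (k : ℕ) :
    |conv x y k| ≤ conv x (fun n => |y n|) k := by
  refine (Finset.abs_sum_le_sum_abs _ _).trans (Finset.sum_le_sum fun i _ => ?_)
  rw [abs_mul, abs_of_nonneg (hx _)]

set_option maxHeartbeats 1000000 in
/-- Key subadditivity of the ℓ¹ distance under convolution. -/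
lemma conv_dist_le {a b u v : ℕ → ℝ} (ha : Summable a) (hb : Summable b)
    (hu : Summable u) (hv : Summable v) (hb0 : ∀ k, 0 ≤ b k) (hu0 : ∀ k, 0 ≤ u k)
    (hbs : ∑' k, b k = 1) (hus : ∑' k, u k = 1) :
    ∑' k, |conv a u k - conv b v k| ≤ (∑' k, |a k - b k|) + ∑' k, |u k - v k| := by
  have hab : Summable fun k => |a k - b k| := summable_abs_iff.mpr (ha.sub hb)
  have huv : Summable fun k => |u k - v k| := summable_abs_iff.mpr (hu.sub hv)
  have h1 : HasSum (conv (fun n => |a n - b n|) u) ((∑' k, |a k - b k|) * ∑' k, u k) :=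
    hasSum_conv hab hu
  have h2 : HasSum (conv b (fun n => |u n - v n|)) ((∑' k, b k) * ∑' k, |u k - v k|) :=
    hasSum_conv hb huv
  have hpt : ∀ k, |conv a u k - conv b v k| ≤
      conv (fun n => |a n - b n|) u k + conv b (fun n => |u n - v n|) k := by
    intro k
    have hsplit : conv a u k - conv b v k =
        conv (fun n => a n - b n) u k + conv b (fun n => u n - v n) k := by
      unfold conv
      rw [← Finset.sum_sub_distrib, ← Finset.sum_add_distrib]
      exact Finset.sum_congr rfl fun i _ => by ring
    rw [hsplit]
    exact (abs_add_le _ _).trans (add_le_add (abs_conv_le_left hu0 k) (abs_conv_le_right hb0 k))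
  have hRsum : Summable fun k =>
      conv (fun n => |a n - b n|) u k + conv b (fun n => |u n - v n|) k :=
    h1.summable.add h2.summable
  calc ∑' k, |conv a u k - conv b v k|
      ≤ ∑' k, (conv (fun n => |a n - b n|) u k + conv b (fun n => |u n - v n|) k) :=
        Summable.tsum_le_tsum hpt (Summable.of_nonneg_of_le (fun k => abs_nonneg _) hpt hRsum) hRsum
    _ = (∑' k, |a k - b k|) * (∑' k, u k) + (∑' k, b k) * (∑' k, |u k - v k|) := by
        rw [Summable.tsum_add h1.summable h2.summable, h1.tsum_eq, h2.tsum_eq]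
    _ = (∑' k, |a k - b k|) + ∑' k, |u k - v k| := by rw [hbs, hus]; ring

/-- Le Cam's one-variable bound. -/
lemma bern_poi_dist {p : ℝ} (hp0 : 0 ≤ p) :
    ∑' k, |bern p k - poi p k| ≤ 2 * p ^ 2 := by
  have hsum : Summable fun k => |bern p k - poi p k| :=
    summable_abs_iff.mpr ((summable_bern p).sub (summable_poi p))
  have hsum1 : Summable fun k => |bern p (k + 1) - poi p (k + 1)| :=
    (summable_nat_add_iff (f := fun k => |bern p k - poi p k|) 1).mpr hsum
  have e1 : 1 - p ≤ Real.exp (-p) := by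
    have := Real.add_one_le_exp (-p); linarith
  have e2 : 1 + p ≤ Real.exp p := by
    have := Real.add_one_le_exp p; linarith
  have epos : 0 < Real.exp (-p) := Real.exp_pos _
  have eppos : 0 < Real.exp p := Real.exp_pos _
  have emul : Real.exp (-p) * Real.exp p = 1 := by rw [← Real.exp_add]; simp
  have ele1 : Real.exp (-p) ≤ 1 := by nlinarith
  have eprod : Real.exp (-p) * (1 + p) ≤ 1 := by nlinarith
  have hp0v : poi p 0 = Real.exp (-p) := by simp [poi]
  have hp1v : poi p 1 = Real.exp (-p) * p := by simp [poi]
  have htail : ∑' k : ℕ, poi p (k + 1 + 1) = 1 - poi p 0 - poi p 1 := by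
    have hps := (hasSum_poi p).summable
    have f0 := Summable.tsum_eq_zero_add hps
    have f1 := Summable.tsum_eq_zero_add ((summable_nat_add_iff (f := poi p) 1).mpr hps)
    rw [(hasSum_poi p).tsum_eq] at f0
    linarith [f0, f1]
  rw [Summable.tsum_eq_zero_add hsum, Summable.tsum_eq_zero_add hsum1]
  have hk2 : ∀ k : ℕ, |bern p (k + 1 + 1) - poi p (k + 1 + 1)| = poi p (k + 1 + 1) := by
    intro k
    have : bern p (k + 1 + 1) = 0 := by simp [bern]
    rw [this, zero_sub, abs_neg, abs_of_nonneg (poi_nonneg hp0 _)]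
  rw [tsum_congr hk2, htail]
  have hb0 : bern p 0 = 1 - p := by simp [bern]
  have hb1 : bern p 1 = p := by simp [bern]
  rw [hb0, hb1, hp0v, hp1v]
  have ha0 : |1 - p - Real.exp (-p)| = Real.exp (-p) - (1 - p) := by
    rw [abs_of_nonpos (by linarith)]; ring
  have ha1 : |p - Real.exp (-p) * p| = p - Real.exp (-p) * p := by
    rw [abs_of_nonneg (by nlinarith)]
  rw [ha0, ha1]
  nlinarith

end LeCamAux

open LeCamAux

lemma LeCamAux.summable_measure {Ω : Type*} [MeasureSpace Ω]
    [IsProbabilityMeasure (volume : Measure Ω)] {g : Ω → ℕ} (hg : Measurable g) :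
    Summable fun k => ((volume : Measure Ω) {ω | g ω = k}).toReal := by
  apply ENNReal.summable_toReal
  have hd : Pairwise (Function.onFun Disjoint fun k => {ω | g ω = k}) := by
    intro k l hkl
    refine Set.disjoint_left.mpr fun ω h1 h2 => hkl ?_
    simp only [Set.mem_setOf_eq] at h1 h2
    omega
  have hm : ∀ k : ℕ, MeasurableSet {ω | g ω = k} := fun k =>
    hg (measurableSet_singleton k)
  have := measure_iUnion (μ := (volume : Measure Ω)) hd hm
  rw [← this]
  exact measure_ne_top _ _

/-- Le Cam's inequality: for independent Bernoulli random variables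
`ε 1, ..., ε m` with success probabilities `p j`, letting `Σ = ∑ ε j` and
`λ = ∑ p j`, we have `∑ₖ |P(Σ = k) - e^{-λ} λ^k / k!| ≤ 2 ∑ p j ^ 2`. -/
theorem stmt_1 {Ω : Type*} [MeasureSpace Ω] [IsProbabilityMeasure (volume : Measure Ω)]
    (m : ℕ) (ε : Fin m → Ω → ℕ) (p : Fin m → ℝ)
    (hmeas : ∀ j, Measurable (ε j))
    (hber : ∀ j ω, ε j ω = 0 ∨ ε j ω = 1)
    (hind : iIndepFun ε (volume : Measure Ω))
    (hp : ∀ j, ((volume : Measure Ω) {ω | ε j ω = 1}).toReal = p j) :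
    ∑' k : ℕ,
        |((volume : Measure Ω) {ω | ∑ j, ε j ω = k}).toReal -
          Real.exp (-(∑ j, p j)) * (∑ j, p j) ^ k / (Nat.factorial k)|
      ≤ 2 * ∑ j, p j ^ 2 := by
  classical
  have hp0 : ∀ j, 0 ≤ p j := fun j => (hp j) ▸ ENNReal.toReal_nonneg
  have hp1 : ∀ j, p j ≤ 1 := by
    intro j
    rw [← hp j]
    have h1 : (volume : Measure Ω) {ω | ε j ω = 1} ≤ 1 := prob_le_one
    calc ((volume : Measure Ω) {ω | ε j ω = 1}).toReal ≤ (1 : ℝ≥0∞).toReal :=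
          ENNReal.toReal_mono ENNReal.one_ne_top h1
      _ = 1 := by simp
  have claim : ∀ s : Finset (Fin m),
      ∑' k : ℕ, |((volume : Measure Ω) {ω | ∑ j ∈ s, ε j ω = k}).toReal -
        poi (∑ j ∈ s, p j) k| ≤ 2 * ∑ j ∈ s, p j ^ 2 := by
    intro s
    induction s using Finset.induction_on with
    | empty =>
      have hz : ∀ k : ℕ, |((volume : Measure Ω) {ω | ∑ j ∈ (∅ : Finset (Fin m)), ε j ω = k}).toReal -
          poi (∑ j ∈ (∅ : Finset (Fin m)), p j) k| = 0 := by
        intro k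
        simp only [Finset.sum_empty]
        match k with
        | 0 =>
          have hs : {ω : Ω | (0 : ℕ) = 0} = Set.univ := by ext ω; simp
          rw [hs, measure_univ]
          simp [poi]
        | n + 1 =>
          have hs : {ω : Ω | (0 : ℕ) = n + 1} = ∅ := by ext ω; simp
          rw [hs, measure_empty]
          simp [poi]
      calc ∑' k : ℕ, |((volume : Measure Ω) {ω | ∑ j ∈ (∅ : Finset (Fin m)), ε j ω = k}).toReal -
            poi (∑ j ∈ (∅ : Finset (Fin m)), p j) k| = ∑' _ : ℕ, (0 : ℝ) := tsum_congr hz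
        _ = 0 := tsum_zero
        _ ≤ 2 * ∑ j ∈ (∅ : Finset (Fin m)), p j ^ 2 := by simp
    | @insert i s hi ih =>
      have hSm : Measurable fun ω => ∑ j ∈ s, ε j ω :=
        Finset.measurable_sum s fun j _ => hmeas j
      have hInd : IndepFun (fun ω => ∑ j ∈ s, ε j ω) (ε i) (volume : Measure Ω) := by
        have h := hind.indepFun_finsetSum_of_notMem hmeas hi
        have hfe : (∑ j ∈ s, ε j) = fun ω => ∑ j ∈ s, ε j ω := by
          funext ω; simp
        rwa [hfe] at h
      have hkey : ∀ n b : ℕ,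
          (volume : Measure Ω) ((fun ω => ∑ j ∈ s, ε j ω) ⁻¹' {n} ∩ ε i ⁻¹' {b}) =
            (volume : Measure Ω) ((fun ω => ∑ j ∈ s, ε j ω) ⁻¹' {n}) *
              (volume : Measure Ω) (ε i ⁻¹' {b}) := fun n b =>
        hInd.measure_inter_preimage_eq_mul _ _ (measurableSet_singleton n)
          (measurableSet_singleton b)
      have hq1r : ((volume : Measure Ω) (ε i ⁻¹' {1})).toReal = p i := by
        have : ε i ⁻¹' {1} = {ω | ε i ω = 1} := rfl
        rw [this, hp i]
      have hq0r : ((volume : Measure Ω) (ε i ⁻¹' {0})).toReal = 1 - p i := by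
        have hset0 : (ε i ⁻¹' {0}) = (ε i ⁻¹' {1})ᶜ := by
          ext ω; rcases hber i ω with h | h <;> simp [h]
        rw [hset0, measure_compl (hmeas i (measurableSet_singleton 1)) (measure_ne_top _ _),
          measure_univ, ENNReal.toReal_sub_of_le prob_le_one ENNReal.one_ne_top]
        rw [hq1r]; simp
      have hpre : ∀ n : ℕ, (fun ω => ∑ j ∈ s, ε j ω) ⁻¹' {n} = {ω | ∑ j ∈ s, ε j ω = n} := by
        intro n; rfl
      have hFins : ∀ k : ℕ, ((volume : Measure Ω) {ω | ∑ j ∈ insert i s, ε j ω = k}).toReal =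
          conv (fun n => ((volume : Measure Ω) {ω | ∑ j ∈ s, ε j ω = n}).toReal)
            (bern (p i)) k := by
        intro k
        have hsum_insert : {ω : Ω | ∑ j ∈ insert i s, ε j ω = k} =
            {ω : Ω | ε i ω + ∑ j ∈ s, ε j ω = k} := by
          ext ω; rw [Set.mem_setOf_eq, Set.mem_setOf_eq, Finset.sum_insert hi]
        rw [hsum_insert]
        match k with
        | 0 =>
          have hseteq : {ω : Ω | ε i ω + ∑ j ∈ s, ε j ω = 0} =
              (fun ω => ∑ j ∈ s, ε j ω) ⁻¹' {0} ∩ ε i ⁻¹' {0} := by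
            ext ω
            simp only [Set.mem_setOf_eq, Set.mem_inter_iff, Set.mem_preimage,
              Set.mem_singleton_iff]
            omega
          rw [hseteq, hkey 0 0, ENNReal.toReal_mul, hq0r, conv_zero]
          have hb0 : bern (p i) 0 = 1 - p i := by simp [bern]
          rw [hb0, hpre 0]
        | n + 1 =>
          have hseteq : {ω : Ω | ε i ω + ∑ j ∈ s, ε j ω = n + 1} =
              ((fun ω => ∑ j ∈ s, ε j ω) ⁻¹' {n + 1} ∩ ε i ⁻¹' {0}) ∪
                ((fun ω => ∑ j ∈ s, ε j ω) ⁻¹' {n} ∩ ε i ⁻¹' {1}) := by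
            ext ω
            simp only [Set.mem_setOf_eq, Set.mem_union, Set.mem_inter_iff, Set.mem_preimage,
              Set.mem_singleton_iff]
            rcases hber i ω with h | h <;> rw [h] <;> omega
          have hdisj : Disjoint
              ((fun ω => ∑ j ∈ s, ε j ω) ⁻¹' {n + 1} ∩ ε i ⁻¹' {0})
              ((fun ω => ∑ j ∈ s, ε j ω) ⁻¹' {n} ∩ ε i ⁻¹' {1}) := by
            refine Set.disjoint_left.mpr ?_
            rintro ω ⟨-, h0⟩ ⟨-, h1⟩
            simp only [Set.mem_preimage, Set.mem_singleton_iff] at h0 h1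
            omega
          have hmR : MeasurableSet
              ((fun ω => ∑ j ∈ s, ε j ω) ⁻¹' {n} ∩ ε i ⁻¹' {1}) :=
            (hSm (measurableSet_singleton n)).inter (hmeas i (measurableSet_singleton 1))
          rw [hseteq, measure_union hdisj hmR, hkey (n + 1) 0, hkey n 1,
            ENNReal.toReal_add
              (ENNReal.mul_ne_top (measure_ne_top _ _) (measure_ne_top _ _))
              (ENNReal.mul_ne_top (measure_ne_top _ _) (measure_ne_top _ _)),
            ENNReal.toReal_mul, ENNReal.toReal_mul, hq0r, hq1r, conv_bern,
            hpre n, hpre (n + 1)]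
      have hP : ∀ k : ℕ, poi (∑ j ∈ insert i s, p j) k =
          conv (poi (∑ j ∈ s, p j)) (poi (p i)) k := by
        intro k
        rw [Finset.sum_insert hi, add_comm]
        exact poi_conv _ _ k
      have hΛ0 : 0 ≤ ∑ j ∈ s, p j := Finset.sum_nonneg fun j _ => hp0 j
      calc ∑' k : ℕ, |((volume : Measure Ω) {ω | ∑ j ∈ insert i s, ε j ω = k}).toReal -
            poi (∑ j ∈ insert i s, p j) k|
          = ∑' k : ℕ, |conv (fun n => ((volume : Measure Ω) {ω | ∑ j ∈ s, ε j ω = n}).toReal)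
              (bern (p i)) k - conv (poi (∑ j ∈ s, p j)) (poi (p i)) k| :=
            tsum_congr fun k => by rw [hFins k, hP k]
        _ ≤ (∑' k : ℕ, |((volume : Measure Ω) {ω | ∑ j ∈ s, ε j ω = k}).toReal -
              poi (∑ j ∈ s, p j) k|) + ∑' k : ℕ, |bern (p i) k - poi (p i) k| :=
            conv_dist_le (LeCamAux.summable_measure hSm) (summable_poi _)
              (summable_bern _) (summable_poi _) (poi_nonneg hΛ0)
              (bern_nonneg (hp0 i) (hp1 i)) (tsum_poi _) (tsum_bern _)
        _ ≤ 2 * ∑ j ∈ s, p j ^ 2 + 2 * p i ^ 2 :=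
            add_le_add ih (bern_poi_dist (hp0 i))
        _ = 2 * ∑ j ∈ insert i s, p j ^ 2 := by rw [Finset.sum_insert hi]; ring
  have := claim Finset.univ
  simpa [poi] using this
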